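/- Over a finite field 𝔽_p, the number of tuples (x_1,…,x_{ℓ_1}, y_1,…,y_{ℓ_2}, z_1,…,z_{ℓ_3}) ∈ 𝔽_p^{ℓ_1+ℓ_2+ℓ_3} with all x_i distinct, all y_j distinct, all z_k distinct, and x_i + y_j + z_k ≠ 0 for all i,j,k, equals p^2 times the number of tuples (x'_1,…,x'_{ℓ_1−1}, y'_1,…,y'_{ℓ_2−1}, z'_1,…,z'_{ℓ_3}) ∈ 𝔽_p^{ℓ_1+ℓ_2+ℓ_3−2} satisfying: all x'_i nonzero and pairwise distinct, all y'_j nonzero and pairwise distinct, all z'_k nonzero and pairwise distinct, x'_i + z'_k ≠ 0, y'_j + z'_k ≠ 0, and x'_i + y'_j + z'_k ≠ 0 for all applicable indices. -/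
import Mathlib


/-- Finite-field count: the number of tuples `(x, y, z)` over `𝔽_p` with the `x_i`
pairwise distinct, the `y_j` pairwise distinct, the `z_k` pairwise distinct and
`x_i + y_j + z_k ≠ 0` for all `i, j, k` equals `p²` times the number of tuples
`(x', y', z')` of lengths `ℓ₁-1, ℓ₂-1, ℓ₃` with all coordinates nonzero and pairwise
distinct within each block, `x'_i + z'_k ≠ 0`, `y'_j + z'_k ≠ 0`, and
`x'_i + y'_j + z'_k ≠ 0`. -/
theorem stmt_15 (p ℓ₁ ℓ₂ ℓ₃ : ℕ) [Fact p.Prime]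
    (h₁ : 0 < ℓ₁) (h₂ : 0 < ℓ₂) (h₃ : 0 < ℓ₃) :
    Nat.card {xyz : (Fin ℓ₁ → ZMod p) × (Fin ℓ₂ → ZMod p) × (Fin ℓ₃ → ZMod p) //
        Function.Injective xyz.1 ∧ Function.Injective xyz.2.1 ∧ Function.Injective xyz.2.2 ∧
        ∀ i j k, xyz.1 i + xyz.2.1 j + xyz.2.2 k ≠ 0} =
    p ^ 2 * Nat.card {x : (Fin (ℓ₁ - 1) → ZMod p) × (Fin (ℓ₂ - 1) → ZMod p) × (Fin ℓ₃ → ZMod p) //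
        (∀ i, x.1 i ≠ 0) ∧ Function.Injective x.1 ∧
        (∀ j, x.2.1 j ≠ 0) ∧ Function.Injective x.2.1 ∧
        (∀ k, x.2.2 k ≠ 0) ∧ Function.Injective x.2.2 ∧
        (∀ i k, x.1 i + x.2.2 k ≠ 0) ∧
        (∀ j k, x.2.1 j + x.2.2 k ≠ 0) ∧
        (∀ i j k, x.1 i + x.2.1 j + x.2.2 k ≠ 0)} := by
  obtain ⟨m, rfl⟩ : ∃ m, ℓ₁ = m + 1 := ⟨ℓ₁ - 1, by omega⟩
  obtain ⟨n, rfl⟩ : ∃ n, ℓ₂ = n + 1 := ⟨ℓ₂ - 1, by omega⟩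
  have e : {xyz : (Fin (m+1) → ZMod p) × (Fin (n+1) → ZMod p) × (Fin ℓ₃ → ZMod p) //
        Function.Injective xyz.1 ∧ Function.Injective xyz.2.1 ∧ Function.Injective xyz.2.2 ∧
        ∀ i j k, xyz.1 i + xyz.2.1 j + xyz.2.2 k ≠ 0} ≃
      (ZMod p × ZMod p) ×
      {x : (Fin m → ZMod p) × (Fin n → ZMod p) × (Fin ℓ₃ → ZMod p) //
        (∀ i, x.1 i ≠ 0) ∧ Function.Injective x.1 ∧
        (∀ j, x.2.1 j ≠ 0) ∧ Function.Injective x.2.1 ∧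
        (∀ k, x.2.2 k ≠ 0) ∧ Function.Injective x.2.2 ∧
        (∀ i k, x.1 i + x.2.2 k ≠ 0) ∧
        (∀ j k, x.2.1 j + x.2.2 k ≠ 0) ∧
        (∀ i j k, x.1 i + x.2.1 j + x.2.2 k ≠ 0)} := by
    refine
      { toFun := fun s =>
          ⟨(s.1.1 (Fin.last m), s.1.2.1 (Fin.last n)),
           ⟨(fun i => s.1.1 i.castSucc - s.1.1 (Fin.last m),
             fun j => s.1.2.1 j.castSucc - s.1.2.1 (Fin.last n),
             fun k => s.1.2.2 k + s.1.1 (Fin.last m) + s.1.2.1 (Fin.last n)), ?_⟩⟩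
        invFun := fun t =>
          ⟨(Fin.snoc (fun i => t.2.1.1 i + t.1.1) t.1.1,
            Fin.snoc (fun j => t.2.1.2.1 j + t.1.2) t.1.2,
            fun k => t.2.1.2.2 k - t.1.1 - t.1.2), ?_⟩
        left_inv := ?_
        right_inv := ?_ }
    · obtain ⟨⟨x, y, z⟩, hx, hy, hz, h⟩ := s
      refine ⟨?_, ?_, ?_, ?_, ?_, ?_, ?_, ?_, ?_⟩
      · intro i h0
        exact (Fin.castSucc_lt_last i).ne (hx (sub_eq_zero.mp h0))
      · intro i j hij
        exact Fin.castSucc_injective _ (hx (by linear_combination hij))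
      · intro j h0
        exact (Fin.castSucc_lt_last j).ne (hy (sub_eq_zero.mp h0))
      · intro i j hij
        exact Fin.castSucc_injective _ (hy (by linear_combination hij))
      · intro k h0
        exact h (Fin.last m) (Fin.last n) k (by linear_combination h0)
      · intro k l h'
        exact hz (by linear_combination h')
      · intro i k h0
        exact h i.castSucc (Fin.last n) k (by linear_combination h0)
      · intro j k h0
        exact h (Fin.last m) j.castSucc k (by linear_combination h0)
      · intro i j k h0
        exact h i.castSucc j.castSucc k (by linear_combination h0)
    · obtain ⟨⟨a, b⟩, ⟨⟨x, y, z⟩, hx0, hx, hy0, hy, hz0, hz, hxz, hyz, hxyz⟩⟩ := t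
      refine ⟨?_, ?_, ?_, ?_⟩
      · intro i j hij
        induction i using Fin.lastCases with
        | last =>
          induction j using Fin.lastCases with
          | last => rfl
          | cast j =>
            simp only [Fin.snoc_last, Fin.snoc_castSucc] at hij
            exact absurd (by linear_combination -hij) (hx0 j)
        | cast i =>
          induction j using Fin.lastCases with
          | last =>
            simp only [Fin.snoc_last, Fin.snoc_castSucc] at hij
            exact absurd (by linear_combination hij) (hx0 i)
          | cast j =>
            simp only [Fin.snoc_castSucc] at hij
            exact congrArg Fin.castSucc (hx (by linear_combination hij))
      · intro i j hij
        induction i using Fin.lastCases with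
        | last =>
          induction j using Fin.lastCases with
          | last => rfl
          | cast j =>
            simp only [Fin.snoc_last, Fin.snoc_castSucc] at hij
            exact absurd (by linear_combination -hij) (hy0 j)
        | cast i =>
          induction j using Fin.lastCases with
          | last =>
            simp only [Fin.snoc_last, Fin.snoc_castSucc] at hij
            exact absurd (by linear_combination hij) (hy0 i)
          | cast j =>
            simp only [Fin.snoc_castSucc] at hij
            exact congrArg Fin.castSucc (hy (by linear_combination hij))
      · intro k l h'
        exact hz (by linear_combination h')
      · intro i j k
        induction i using Fin.lastCases with
        | last =>
          induction j using Fin.lastCases with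
          | last =>
            simp only [Fin.snoc_last]
            intro h0
            exact hz0 k (by linear_combination h0)
          | cast j =>
            simp only [Fin.snoc_last, Fin.snoc_castSucc]
            intro h0
            exact hyz j k (by linear_combination h0)
        | cast i =>
          induction j using Fin.lastCases with
          | last =>
            simp only [Fin.snoc_last, Fin.snoc_castSucc]
            intro h0
            exact hxz i k (by linear_combination h0)
          | cast j =>
            simp only [Fin.snoc_castSucc]
            intro h0
            exact hxyz i j k (by linear_combination h0)
    · rintro ⟨⟨x, y, z⟩, h⟩
      apply Subtype.ext
      refine Prod.ext ?_ (Prod.ext ?_ ?_)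
      · funext i
        induction i using Fin.lastCases with
        | last => simp
        | cast i => simp
      · funext j
        induction j using Fin.lastCases with
        | last => simp
        | cast j => simp
      · funext k
        simp only
        ring
    · rintro ⟨⟨a, b⟩, ⟨⟨x, y, z⟩, h⟩⟩
      refine Prod.ext ?_ (Subtype.ext ?_)
      · simp
      · refine Prod.ext ?_ (Prod.ext ?_ ?_)
        · funext i; simp
        · funext j; simp
        · funext k
          simp only [Fin.snoc_last]
          ring
  rw [Nat.card_congr e, Nat.card_prod]
  congr 1
  simp [Nat.card_eq_fintype_card, ZMod.card, sq]
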